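/- arXiv:1807.09962 — 2 statements merged into one kernel-verified Lean document; each statement's English description precedes it below -/
import Mathlib

section
/- Conditional variance lower bound: let Σ be a real symmetric positive semi-definite m×m matrix and σ > 0 such that Σ − σ²·I is positive semi-definite. Then for any index i and any subset S of indices not containing i with Σ_{S,S} invertible, the conditional variance Σ_{ii} − Σ_{i,S}·(Σ_{S,S})⁻¹·Σ_{S,i} is at least σ². -/
open Matrix

private lemma ext_dot {m : ℕ} (S : Finset (Fin m)) (w : {x // x ∈ S} → ℝ)
    (u : Fin m → ℝ) :
    (fun k : Fin m => if h : k ∈ S then w ⟨k, h⟩ else 0) ⬝ᵥ u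
      = w ⬝ᵥ (fun j : {x // x ∈ S} => u (j : Fin m)) := by
  classical
  calc (fun k : Fin m => if h : k ∈ S then w ⟨k, h⟩ else 0) ⬝ᵥ u
      = ∑ k : Fin m, (if h : k ∈ S then w ⟨k, h⟩ else 0) * u k := rfl
    _ = ∑ k ∈ S, (if h : k ∈ S then w ⟨k, h⟩ else 0) * u k :=
        (Finset.sum_subset (Finset.subset_univ S) (by intro k _ hk; simp [hk])).symm
    _ = ∑ j ∈ S.attach, (if h : (j : Fin m) ∈ S then w ⟨j, h⟩ else 0) * u (j : Fin m) :=
        (Finset.sum_attach S _).symm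
    _ = ∑ j ∈ S.attach, w j * u (j : Fin m) :=
        Finset.sum_congr rfl (fun j _ => by simp [j.2])
    _ = w ⬝ᵥ (fun j : {x // x ∈ S} => u (j : Fin m)) := by
        rw [dotProduct, Finset.univ_eq_attach]

theorem conditional_variance_lower_bound (m : ℕ)
    (S2 : Matrix (Fin m) (Fin m) ℝ) (σ : ℝ) (hσ : 0 < σ)
    (hS2 : S2.PosSemidef) (hnoise : (S2 - σ ^ 2 • (1 : Matrix (Fin m) (Fin m) ℝ)).PosSemidef)
    (i : Fin m) (S : Finset (Fin m)) (hiS : i ∉ S)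
    (hinv : IsUnit (S2.submatrix (fun a : {x // x ∈ S} => (a : Fin m))
        (fun a : {x // x ∈ S} => (a : Fin m))).det) :
    σ ^ 2 ≤ S2 i i -
      (fun j : {x // x ∈ S} => S2 i (j : Fin m)) ⬝ᵥ
        ((S2.submatrix (fun a : {x // x ∈ S} => (a : Fin m))
            (fun a : {x // x ∈ S} => (a : Fin m)))⁻¹ *ᵥ
          fun j : {x // x ∈ S} => S2 (j : Fin m) i) := by
  set A : Matrix {x // x ∈ S} {x // x ∈ S} ℝ :=
    S2.submatrix (fun a : {x // x ∈ S} => (a : Fin m)) (fun a : {x // x ∈ S} => (a : Fin m))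
    with hA
  set v : {x // x ∈ S} → ℝ := fun j => S2 (j : Fin m) i with hv
  set w : {x // x ∈ S} → ℝ := A⁻¹ *ᵥ v with hw
  have hsym : ∀ a b : Fin m, S2 a b = S2 b a := by
    intro a b
    have := hS2.1
    rw [Matrix.IsHermitian] at this
    conv_lhs => rw [← this]
    simp [Matrix.conjTranspose_apply]
  -- the test vector
  set g : Fin m → ℝ := fun k => if h : k ∈ S then w ⟨k, h⟩ else 0 with hg
  set f : Fin m → ℝ := Pi.single i 1 - g with hf
  have hgi : g i = 0 := by simp [hg, hiS]
  have hfi : f i = 1 := by simp [hf, hgi]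
  have hAw : A *ᵥ w = v := by
    rw [hw, Matrix.mulVec_mulVec, Matrix.mul_nonsing_inv _ hinv, Matrix.one_mulVec]
  -- compute sums with g
  have hgdot : ∀ u : Fin m → ℝ, g ⬝ᵥ u = w ⬝ᵥ (fun j : {x // x ∈ S} => u (j : Fin m)) :=
    fun u => ext_dot S w u
  have hS2g : ∀ k : Fin m, (S2 *ᵥ g) k = w ⬝ᵥ (fun j : {x // x ∈ S} => S2 k (j : Fin m)) := by
    intro k
    have : (S2 *ᵥ g) k = g ⬝ᵥ (fun l => S2 k l) := by
      simp [Matrix.mulVec, dotProduct, mul_comm]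
    rw [this, hgdot]
  -- the four bilinear pieces
  have h1 : Pi.single i 1 ⬝ᵥ (S2 *ᵥ Pi.single i (1:ℝ)) = S2 i i := by
    rw [Matrix.mulVec_single, single_dotProduct]; simp
  have h2 : Pi.single i 1 ⬝ᵥ (S2 *ᵥ g) = w ⬝ᵥ v := by
    rw [single_dotProduct, one_mul, hS2g]
    congr 1
    funext j
    exact hsym i j
  have h3 : g ⬝ᵥ (S2 *ᵥ Pi.single i (1:ℝ)) = w ⬝ᵥ v := by
    rw [Matrix.mulVec_single, hgdot]
    simp [hv]
  have h4 : g ⬝ᵥ (S2 *ᵥ g) = w ⬝ᵥ v := by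
    rw [hgdot]
    have : (fun j : {x // x ∈ S} => (S2 *ᵥ g) (j : Fin m)) = A *ᵥ w := by
      funext j
      rw [hS2g]
      simp [Matrix.mulVec, dotProduct, hA, Matrix.submatrix_apply, mul_comm]
    rw [this, hAw]
  have hq : f ⬝ᵥ (S2 *ᵥ f) = S2 i i - w ⬝ᵥ v := by
    rw [hf, Matrix.mulVec_sub, sub_dotProduct, dotProduct_sub, dotProduct_sub,
      h1, h2, h3, h4]
    ring
  -- f ⬝ᵥ f ≥ 1
  have hff : 1 ≤ f ⬝ᵥ f := by
    have := Finset.single_le_sum (f := fun k => f k * f k)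
      (fun k _ => mul_self_nonneg (f k)) (Finset.mem_univ i)
    simpa [dotProduct, hfi] using this
  -- positivity of noise quadratic form
  have hpos := hnoise.dotProduct_mulVec_nonneg f
  rw [Matrix.sub_mulVec, dotProduct_sub, Matrix.smul_mulVec, Matrix.one_mulVec,
    dotProduct_smul] at hpos
  have hstar : (star f : Fin m → ℝ) = f := by simp
  rw [hstar] at hpos
  have key : σ ^ 2 * (f ⬝ᵥ f) ≤ f ⬝ᵥ (S2 *ᵥ f) := by
    have : (0:ℝ) ≤ f ⬝ᵥ (S2 *ᵥ f) - σ ^ 2 * (f ⬝ᵥ f) := by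
      simpa [smul_eq_mul, sub_nonneg] using hpos
    linarith
  have hσ2 : (0:ℝ) ≤ σ ^ 2 := sq_nonneg σ
  have hgoal : (fun j : {x // x ∈ S} => S2 i (j : Fin m)) ⬝ᵥ (A⁻¹ *ᵥ v) = w ⬝ᵥ v := by
    rw [← hw, dotProduct_comm]
    congr 1
    funext j
    exact (hsym i j)
  calc σ ^ 2 = σ ^ 2 * 1 := by ring
    _ ≤ σ ^ 2 * (f ⬝ᵥ f) := by nlinarith
    _ ≤ f ⬝ᵥ (S2 *ᵥ f) := key
    _ = S2 i i - w ⬝ᵥ v := hq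
    _ = S2 i i - (fun j : {x // x ∈ S} => S2 i (j : Fin m)) ⬝ᵥ (A⁻¹ *ᵥ v) := by rw [hgoal]
end

section
/- Single-term variance bound: let 0 < σ² < c and let v be a real number with σ² ≤ v ≤ c. Then v − σ² ≤ (c − σ²)·log(σ⁻²·v) / log(c·σ⁻²). -/
theorem single_term_variance_bound (σ c v : ℝ) (hσ : 0 < σ) (hc : σ ^ 2 < c)
    (hv1 : σ ^ 2 ≤ v) (hv2 : v ≤ c) :
    v - σ ^ 2 ≤ (c - σ ^ 2) * Real.log ((σ ^ 2)⁻¹ * v) / Real.log (c * (σ ^ 2)⁻¹) := by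
  have hs : (0:ℝ) < σ ^ 2 := by positivity
  have hcs : (0:ℝ) < c - σ ^ 2 := by linarith
  have hc0 : (0:ℝ) < c := by linarith
  have hv0 : (0:ℝ) < v := lt_of_lt_of_le hs hv1
  set t : ℝ := (v - σ ^ 2) / (c - σ ^ 2) with ht
  have ht0 : 0 ≤ t := div_nonneg (by linarith) hcs.le
  have ht1 : t ≤ 1 := (div_le_one hcs).mpr (by linarith)
  have hcomb : (1 - t) * σ ^ 2 + t * c = v := by
    field_simp [ht]
    have h2 : t * (c - σ ^ 2) = v - σ ^ 2 := by rw [ht]; exact div_mul_cancel₀ _ hcs.ne'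
    linear_combination h2
  have hconc := strictConcaveOn_log_Ioi.concaveOn.2 (Set.mem_Ioi.mpr hs)
    (Set.mem_Ioi.mpr hc0) (by linarith : (0:ℝ) ≤ 1 - t) ht0 (by ring)
  rw [smul_eq_mul, smul_eq_mul, smul_eq_mul, smul_eq_mul, hcomb] at hconc
  -- hconc : (1 - t) * log σ² + t * log c ≤ log v
  have hlogc : 0 < Real.log (c * (σ ^ 2)⁻¹) := by
    apply Real.log_pos
    rw [← div_eq_mul_inv, lt_div_iff₀ hs]; linarith
  have hkey : t * Real.log (c * (σ ^ 2)⁻¹) ≤ Real.log ((σ ^ 2)⁻¹ * v) := by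
    rw [Real.log_mul hc0.ne' (by positivity), Real.log_mul (by positivity) hv0.ne',
      Real.log_inv]
    nlinarith [hconc]
  rw [le_div_iff₀ hlogc]
  have : v - σ ^ 2 = t * (c - σ ^ 2) := by
    field_simp [ht]
    rw [ht]; exact (div_mul_cancel₀ _ hcs.ne').symm
  rw [this]
  calc t * (c - σ ^ 2) * Real.log (c * (σ ^ 2)⁻¹)
      = (c - σ ^ 2) * (t * Real.log (c * (σ ^ 2)⁻¹)) := by ring
    _ ≤ (c - σ ^ 2) * Real.log ((σ ^ 2)⁻¹ * v) := by
        exact mul_le_mul_of_nonneg_left hkey hcs.le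
end
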